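/- arXiv:1401.0112 — 2 statements merged into one kernel-verified Lean document; each statement's English description precedes it below -/
import Mathlib

section
/- Fix m = 4k, n = 2k, an integer v ≥ 1, and r ∈ R^v_m. Then the number of orbits of the multiplicative action of U_m = {f : gcd(f, m) = 1} on the quotient group ZDiv(r^{v−1} + r^{v−2} + ⋯ + r + 1)/⟨r − 1⟩ equals the number of positive divisors of the integer gcd(r − 1, n)·gcd(r^{v−1} + r^{v−2} + ⋯ + r + 1, n)/n. -/
namespace QDPaper

/-- The "twisting" coefficient: `b * a = a^(n-1) * b` where `n = 2k`, so conjugation by `b`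
multiplies the exponent of `a` by `2k - 1` (mod `4k`). -/
def twist (k : ℕ) : Bool → ZMod (4*k)
  | false => 1
  | true => 2 * (k : ZMod (4*k)) - 1

lemma twist_sq (k : ℕ) : twist k true * twist k true = 1 := by
  have h : ((4*k : ℕ) : ZMod (4*k)) = 0 := ZMod.natCast_self _
  push_cast at h
  show (2 * (k : ZMod (4*k)) - 1) * (2 * (k : ZMod (4*k)) - 1) = 1
  linear_combination ((k : ZMod (4*k)) - 1) * h

lemma twist_mul (k : ℕ) (b1 b2 : Bool) :
    twist k b1 * twist k b2 = twist k (Bool.xor b1 b2) := by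
  cases b1 <;> cases b2
  · simp [twist]
  · simp [twist]
  · simp [twist]
  · exact (twist_sq k).trans rfl

/-- The quasi-dihedral (semidihedral) group
`QD_{2m} = ⟨a, b | a^m = b^2 = 1, b a = a^(n-1) b⟩` with `m = 4k`, `n = 2k`,
realized concretely on pairs `(j, t)` standing for the normal form `a^j * b^t`. -/
def QuasiDihedral (k : ℕ) : Type := ZMod (4*k) × Bool

namespace QuasiDihedral

variable {k : ℕ}

instance : Group (QuasiDihedral k) where
  mul x y := (x.1 + twist k x.2 * y.1, Bool.xor x.2 y.2)
  one := ((0 : ZMod (4*k)), false)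
  inv x := (-(twist k x.2) * x.1, x.2)
  mul_assoc x y z := by
    show ((x.1 + twist k x.2 * y.1) + twist k (Bool.xor x.2 y.2) * z.1,
        Bool.xor (Bool.xor x.2 y.2) z.2)
      = (x.1 + twist k x.2 * (y.1 + twist k y.2 * z.1), Bool.xor x.2 (Bool.xor y.2 z.2))
    rw [Prod.mk.injEq]
    exact ⟨by rw [← twist_mul]; ring, Bool.xor_assoc _ _ _⟩
  one_mul x := by
    obtain ⟨j, t⟩ := x
    show ((0 : ZMod (4*k)) + twist k false * j, Bool.xor false t) = (j, t)
    simp [twist]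
  mul_one x := by
    obtain ⟨j, t⟩ := x
    show (j + twist k t * 0, Bool.xor t false) = (j, t)
    simp
  inv_mul_cancel x := by
    show ((-(twist k x.2) * x.1) + twist k x.2 * x.1, Bool.xor x.2 x.2)
      = ((0 : ZMod (4*k)), false)
    rw [Prod.mk.injEq]
    exact ⟨by ring, Bool.xor_self _⟩

end QuasiDihedral

/-- The generator `a` of the cyclic subgroup of order `m = 4k`. -/
def a (k : ℕ) : QuasiDihedral k := ((1 : ZMod (4*k)), false)

/-- The generator `b`, an element of order `2`. -/
def b (k : ℕ) : QuasiDihedral k := ((0 : ZMod (4*k)), true)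

lemma int_gcd_eq_of_dvd_sub {a b : ℤ} (g : ℤ) (h : g ∣ a - b) : Int.gcd a g = Int.gcd b g := by
  apply Nat.dvd_antisymm
  · rw [← Int.natCast_dvd_natCast]
    refine Int.dvd_coe_gcd ?_ (Int.gcd_dvd_right _ _)
    have h1 : (↑(Int.gcd a g) : ℤ) ∣ a - b := dvd_trans (Int.gcd_dvd_right _ _) h
    have := dvd_sub (Int.gcd_dvd_left _ _) h1
    simpa using this
  · rw [← Int.natCast_dvd_natCast]
    refine Int.dvd_coe_gcd ?_ (Int.gcd_dvd_right _ _)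
    have h1 : (↑(Int.gcd b g) : ℤ) ∣ a - b := dvd_trans (Int.gcd_dvd_right _ _) h
    have := dvd_add (Int.gcd_dvd_left _ _) h1
    simpa using this

lemma exists_unit_mul_modeq {g M : ℕ} (hgM : g ∣ M) (hM : M ≠ 0) {ta tb : ℕ}
    (h : Nat.gcd ta g = Nat.gcd tb g) :
    ∃ f : ℕ, Nat.Coprime f M ∧ f * ta ≡ tb [MOD g] := by
  haveI : NeZero M := ⟨hM⟩
  rcases eq_or_ne g 0 with rfl | hg
  · refine ⟨1, Nat.coprime_one_left M, ?_⟩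
    simp only [Nat.gcd_zero_right] at h
    simpa [Nat.ModEq] using h
  · have hwpos : 0 < Nat.gcd ta g := Nat.gcd_pos_of_pos_right _ (Nat.pos_of_ne_zero hg)
    set w := Nat.gcd ta g with hw
    have hwg : w ∣ g := Nat.gcd_dvd_right ta g
    have hwta : w ∣ ta := Nat.gcd_dvd_left ta g
    have hwtb : w ∣ tb := h ▸ Nat.gcd_dvd_left tb g
    set g' := g / w with hg'
    have hg'M : g' ∣ M := (Nat.div_dvd_of_dvd hwg).trans hgM
    have hca : Nat.Coprime (ta / w) g' := Nat.coprime_div_gcd_div_gcd hwpos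
    have hcb : Nat.Coprime (tb / w) g' := by
      have h2 : 0 < Nat.gcd tb g := h ▸ hwpos
      have := Nat.coprime_div_gcd_div_gcd h2
      rwa [← h] at this
    obtain ⟨F, hF⟩ := ZMod.unitsMap_surjective hg'M
      (ZMod.unitOfCoprime _ hcb * (ZMod.unitOfCoprime _ hca)⁻¹)
    refine ⟨((F : ZMod M)).val, ZMod.val_coe_unit_coprime F, ?_⟩
    have hcast : (((F : ZMod M)).val : ZMod g') = ((F : ZMod M)).cast := ZMod.natCast_val _
    have hmap : ((ZMod.unitsMap hg'M F : ZMod g')) =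
        ((ZMod.unitOfCoprime _ hcb * (ZMod.unitOfCoprime _ hca)⁻¹ : (ZMod g')ˣ) : ZMod g') := by
      rw [hF]
    have hmap2 : ((F : ZMod M)).cast =
        ((ZMod.unitOfCoprime _ hcb * (ZMod.unitOfCoprime _ hca)⁻¹ : (ZMod g')ˣ) : ZMod g') := by
      rw [← hmap, ZMod.unitsMap_def]
      simp [ZMod.castHom_apply]
    -- key modular equation mod g'
    have hkey : (((F : ZMod M)).val * (ta / w) : ℕ) ≡ (tb / w) [MOD g'] := by
      rw [← ZMod.natCast_eq_natCast_iff]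
      push_cast
      rw [hcast, hmap2]
      have hA : ((ta / w : ℕ) : ZMod g') = (ZMod.unitOfCoprime _ hca : ZMod g') := by
        rw [ZMod.coe_unitOfCoprime]
      have hB : ((tb / w : ℕ) : ZMod g') = (ZMod.unitOfCoprime _ hcb : ZMod g') := by
        rw [ZMod.coe_unitOfCoprime]
      rw [hA, hB]
      push_cast
      simp only [mul_assoc]
      rw [Units.inv_mul, mul_one]
    have := Nat.ModEq.mul_left' w hkey
    rw [Nat.mul_div_cancel' hwg] at this
    calc ((F : ZMod M)).val * ta = w * (((F : ZMod M)).val * (ta / w)) := by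
          conv_lhs => rw [← Nat.mul_div_cancel' hwta]
          ring
      _ ≡ w * (tb / w) [MOD g] := this
      _ = tb := Nat.mul_div_cancel' hwtb

lemma nat_dvd_mul_iff {N : ℕ} (hN : N ≠ 0) (S c : ℤ) :
    (N : ℤ) ∣ S * c ↔ ((N / Int.gcd S N : ℕ) : ℤ) ∣ c := by
  set e := Int.gcd S N with he
  have he0 : e ≠ 0 := by
    intro h0
    exact hN (by exact_mod_cast (Int.gcd_eq_zero_iff.mp h0).2)
  have heS : (e : ℤ) ∣ S := Int.gcd_dvd_left _ _
  have heN : e ∣ N := Int.natCast_dvd_natCast.mp (Int.gcd_dvd_right _ _)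
  set q := N / e with hqdef
  have hq : e * q = N := Nat.mul_div_cancel' heN
  set S' := S / (e : ℤ) with hS'
  have hSe : (e : ℤ) * S' = S := Int.mul_ediv_cancel' heS
  have hcop : Int.gcd S' (q : ℤ) = 1 := by
    have hpos : 0 < Int.gcd S (N : ℤ) := Nat.pos_of_ne_zero he0
    have := Int.gcd_div_gcd_div_gcd hpos
    have hq2 : ((N : ℤ) / (e : ℤ)) = (q : ℤ) := by
      rw [← hq]; push_cast
      rw [Int.mul_ediv_cancel_left _ (by exact_mod_cast he0)]
    rw [← he, hq2] at this
    exact this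
  constructor
  · intro hdvd
    have hq' : (e : ℤ) * (q : ℤ) = (N : ℤ) := by exact_mod_cast hq
    have h1 : (e : ℤ) * (q : ℤ) ∣ (e : ℤ) * (S' * c) := by
      rw [← mul_assoc, hSe, hq']
      exact hdvd
    have h2 : (q : ℤ) ∣ S' * c :=
      (mul_dvd_mul_iff_left (by exact_mod_cast he0 : (e:ℤ) ≠ 0)).mp h1
    exact (Int.isCoprime_iff_gcd_eq_one.mpr (by rwa [Int.gcd_comm] at hcop)).dvd_of_dvd_mul_left h2
  · rintro ⟨c', rfl⟩
    refine ⟨S' * c', ?_⟩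
    rw [← hSe]
    push_cast [← hq]
    ring

lemma mem_zmultiples_iff_gcd_dvd {N : ℕ} (s c : ℤ) :
    ((c : ℤ) : ZMod N) ∈ AddSubgroup.zmultiples ((s : ℤ) : ZMod N) ↔
      (Int.gcd s N : ℤ) ∣ c := by
  rw [AddSubgroup.mem_zmultiples_iff]
  constructor
  · rintro ⟨m, hm⟩
    have hm' : ((m * s : ℤ) : ZMod N) = (c : ZMod N) := by
      rw [← hm]; push_cast [zsmul_eq_mul]; ring
    have : (N : ℤ) ∣ c - m * s := ((ZMod.intCast_eq_intCast_iff _ _ _).mp hm').dvd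
    have h1 : (Int.gcd s N : ℤ) ∣ c - m * s := dvd_trans (Int.gcd_dvd_right _ _) this
    have h2 : (Int.gcd s N : ℤ) ∣ m * s := Dvd.dvd.mul_left (Int.gcd_dvd_left _ _) m
    simpa using dvd_add h1 h2
  · rintro ⟨c', rfl⟩
    refine ⟨Int.gcdA s N * c', ?_⟩
    rw [show ((Int.gcdA s N * c') • ((s : ℤ) : ZMod N)) = ((Int.gcdA s N * c' * s : ℤ) : ZMod N) by
      push_cast [zsmul_eq_mul]; ring]
    rw [ZMod.intCast_eq_intCast_iff]
    have hb := Int.gcd_eq_gcd_ab s N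
    have : (↑(Int.gcd s ↑N) * c' - Int.gcdA s N * c' * s) = (N : ℤ) * (Int.gcdB s N * c') := by
      linear_combination c' * hb
    exact Int.modEq_iff_dvd.mpr (by rw [this]; exact Dvd.intro _ rfl)

/-- Fix `m = 4k`, `n = 2k`, `v ≥ 1`, `r ∈ R^v_m`. The number of orbits of the
multiplicative action of `U_m = {f : gcd(f,m) = 1}` on the quotient group
`ZDiv(r^(v-1) + ⋯ + r + 1)/⟨r-1⟩` equals the number of positive divisors of
`gcd(r-1, n) * gcd(r^(v-1) + ⋯ + r + 1, n) / n`.  (The orbits are realized as classes of the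
relation `x ∼ y ↔ ∃ f, gcd(f,m) = 1 ∧ f•x - y ∈ ⟨r-1⟩` on `ZDiv(r^(v-1) + ⋯ + r + 1)`.) -/
theorem statement7 (k : ℕ) (hk : 1 ≤ k) (v : ℕ) (hv : 1 ≤ v) (r : ℤ)
    (hr : Int.gcd r (4*k) = 1) (hrv : r^v ≡ 1 [ZMOD (2*k)]) :
    Nat.card (Quot (fun (x y :
        {z : ZMod (2*k) // ((∑ i ∈ Finset.range v, r^i : ℤ) : ZMod (2*k)) * z = 0}) =>
      ∃ f : ℤ, Int.gcd f (4*k) = 1 ∧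
        ((f : ZMod (2*k)) * x.1 - y.1)
          ∈ AddSubgroup.zmultiples ((r - 1 : ℤ) : ZMod (2*k))))
      = (Nat.divisors
          ((Int.gcd (r - 1) (2*k) * Int.gcd (∑ i ∈ Finset.range v, r^i) (2*k)) / (2*k))).card := by
  have hN0 : (2*k) ≠ 0 := by omega
  haveI : NeZero (2*k) := ⟨hN0⟩
  set S : ℤ := ∑ i ∈ Finset.range v, r^i with hSdef
  set e : ℕ := Int.gcd S ((2*k : ℕ) : ℤ) with hedef
  set d : ℕ := Int.gcd (r - 1) ((2*k : ℕ) : ℤ) with hddef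
  have he0 : e ≠ 0 := fun h0 => hN0 (by exact_mod_cast (Int.gcd_eq_zero_iff.mp h0).2)
  have hd0 : d ≠ 0 := fun h0 => hN0 (by exact_mod_cast (Int.gcd_eq_zero_iff.mp h0).2)
  have heN : e ∣ 2*k := Int.natCast_dvd_natCast.mp (hedef ▸ Int.gcd_dvd_right _ _)
  have hdN : d ∣ 2*k := Int.natCast_dvd_natCast.mp (hddef ▸ Int.gcd_dvd_right _ _)
  set q : ℕ := (2*k) / e with hqdef
  have hq : e * q = 2*k := Nat.mul_div_cancel' heN
  have hq0 : q ≠ 0 := by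
    intro h0; rw [h0, mul_zero] at hq; exact hN0 hq.symm
  -- membership in ZDiv(S)
  have hmemZ : ∀ z : ZMod (2*k), ((S : ZMod (2*k)) * z = 0 ↔ q ∣ z.val) := by
    intro z
    have hz : ((z.val : ℕ) : ZMod (2*k)) = z := by rw [ZMod.natCast_val, ZMod.cast_id]
    have hcast : ((S * (z.val : ℤ) : ℤ) : ZMod (2*k)) = (S : ZMod (2*k)) * z := by
      push_cast
      rw [hz]
    rw [← hcast, ZMod.intCast_zmod_eq_zero_iff_dvd]
    have h := nat_dvd_mul_iff hN0 S (z.val : ℤ)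
    rw [← hedef, ← hqdef] at h
    rw [h]
    exact Int.natCast_dvd_natCast
  -- q divides d
  have hgeom : S * (r - 1) = r^v - 1 := geom_sum_mul r v
  have hNr : ((2*k : ℕ) : ℤ) ∣ S * (r - 1) := by
    rw [hgeom]
    obtain ⟨c, hc⟩ := hrv.dvd
    exact ⟨-c, by push_cast; linarith⟩
  have hqr : ((q : ℕ) : ℤ) ∣ (r - 1) := by
    have h := (nat_dvd_mul_iff hN0 S (r - 1)).mp hNr
    rwa [← hedef, ← hqdef] at h
  have hqN : q ∣ 2*k := ⟨e, by rw [← hq]; ring⟩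
  have hqd : q ∣ d := by
    have := Int.dvd_coe_gcd hqr (by exact_mod_cast hqN : ((q:ℕ):ℤ) ∣ ((2*k : ℕ) : ℤ))
    rw [← hddef] at this
    exact_mod_cast this
  set g : ℕ := d / q with hgdef
  have hg : q * g = d := Nat.mul_div_cancel' hqd
  have hg0 : g ≠ 0 := fun h0 => hd0 (by rw [← hg, h0, mul_zero])
  have hgd : g ∣ d := ⟨q, by rw [← hg]; ring⟩
  have hgN : g ∣ 2*k := hgd.trans hdN
  have hge : g ∣ e := by
    have h1 : q * g ∣ q * e := by
      rw [hg, mul_comm q e, hq]; exact hdN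
    exact (Nat.mul_dvd_mul_iff_left (Nat.pos_of_ne_zero hq0)).mp h1
  have hgM : g ∣ 4*k := hgN.trans ⟨2, by ring⟩
  have hmemD : ∀ c : ℤ, ((c : ZMod (2*k)) ∈ AddSubgroup.zmultiples ((r - 1 : ℤ) : ZMod (2*k))
      ↔ (d : ℤ) ∣ c) := by
    intro c
    have h := mem_zmultiples_iff_gcd_dvd (N := 2*k) (r - 1) c
    rwa [← hddef] at h
  -- relation characterization
  have hrel : ∀ (x y : {z : ZMod (2*k) // (S : ZMod (2*k)) * z = 0}),
      (∃ f : ℤ, Int.gcd f (4*k) = 1 ∧ ((f : ZMod (2*k)) * x.1 - y.1)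
          ∈ AddSubgroup.zmultiples ((r - 1 : ℤ) : ZMod (2*k)))
      ↔ Nat.gcd (x.1.val / q) g = Nat.gcd (y.1.val / q) g := by
    intro x y
    have hvx : q ∣ x.1.val := (hmemZ x.1).mp x.2
    have hvy : q ∣ y.1.val := (hmemZ y.1).mp y.2
    set A := x.1.val / q with hA
    set B := y.1.val / q with hB
    have hAx : x.1.val = q * A := (Nat.mul_div_cancel' hvx).symm
    have hBy : y.1.val = q * B := (Nat.mul_div_cancel' hvy).symm
    have hxcast : ∀ f : ℤ, ((f : ZMod (2*k)) * x.1 - y.1)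
        = ((f * x.1.val - y.1.val : ℤ) : ZMod (2*k)) := by
      intro f
      have hx1 : ((x.1.val : ℕ) : ZMod (2*k)) = x.1 := by rw [ZMod.natCast_val, ZMod.cast_id]
      have hy1 : ((y.1.val : ℕ) : ZMod (2*k)) = y.1 := by rw [ZMod.natCast_val, ZMod.cast_id]
      push_cast
      rw [hx1, hy1]
    have hqgZ : (d : ℤ) = (q : ℤ) * (g : ℤ) := by exact_mod_cast hg.symm
    constructor
    · rintro ⟨f, hf, hmem⟩
      rw [hxcast f, hmemD] at hmem
      have hsub : (q : ℤ) * (g : ℤ) ∣ (q : ℤ) * ((f * A - B : ℤ)) := by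
        rw [← hqgZ]
        convert hmem using 1
        push_cast [hAx, hBy]
        ring
      have hgsub : (g : ℤ) ∣ (f * A - B : ℤ) :=
        (mul_dvd_mul_iff_left (by exact_mod_cast hq0 : (q : ℤ) ≠ 0)).mp hsub
      have hf4 : Nat.Coprime f.natAbs (4*k) := by
        have h1 : Int.gcd f ((4*k : ℕ) : ℤ) = 1 := by
          rw [show ((4*k : ℕ) : ℤ) = 4*(k:ℤ) by push_cast; ring]
          exact hf
        simpa [Int.gcd, Nat.Coprime, Int.natAbs_mul] using h1
      have hfg : Nat.Coprime f.natAbs g := Nat.Coprime.coprime_dvd_right hgM hf4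
      have e1 : Int.gcd (f * (A : ℤ)) ((g : ℕ) : ℤ) = Int.gcd (B : ℤ) ((g : ℕ) : ℤ) :=
        int_gcd_eq_of_dvd_sub _ hgsub
      have e2 : Int.gcd (f * (A : ℤ)) ((g : ℕ) : ℤ) = Nat.gcd A g := by
        rw [Int.gcd, Int.natAbs_mul]
        simp only [Int.natAbs_natCast]
        exact Nat.Coprime.gcd_mul_left_cancel A hfg
      have e3 : Int.gcd (B : ℤ) ((g : ℕ) : ℤ) = Nat.gcd B g := Int.gcd_natCast_natCast B g
      rw [← e2, e1, e3]
    · intro h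
      obtain ⟨f, hfc, hmod⟩ := exists_unit_mul_modeq hgM (by omega : 4*k ≠ 0) h
      refine ⟨(f : ℤ), ?_, ?_⟩
      · rw [show (4*(k:ℤ)) = ((4*k : ℕ) : ℤ) by push_cast; ring, Int.gcd_natCast_natCast]
        exact hfc
      · rw [hxcast, hmemD]
        have hdvdg : ((g : ℕ) : ℤ) ∣ ((B : ℤ) - (f : ℤ) * (A : ℤ)) := by
          have := Nat.modEq_iff_dvd.mp hmod
          push_cast at this ⊢
          exact this
        have h2 : ((g : ℕ) : ℤ) ∣ ((f : ℤ) * A - B) := dvd_sub_comm.mp hdvdg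
        rw [show ((f : ℤ) * (x.1.val : ℤ) - (y.1.val : ℤ)) = (q : ℤ) * ((f : ℤ) * A - B) by
          push_cast [hAx, hBy]; ring, hqgZ]
        exact mul_dvd_mul_left _ h2
  -- rewrite the RHS number
  have hgoalnum : (Int.gcd (r - 1) (2*(k:ℤ)) * Int.gcd S (2*(k:ℤ))) / (2*k) = g := by
    have hc : (2*(k:ℤ)) = ((2*k : ℕ) : ℤ) := by push_cast; ring
    rw [hc, ← hddef, ← hedef, ← hg]
    have h1 : q * g * e = g * (2*k) := by rw [← hq]; ring
    rw [h1, Nat.mul_div_cancel g (Nat.pos_of_ne_zero hN0)]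
  rw [show (Int.gcd (r - 1) (2*(k:ℤ)) * Int.gcd S (2*(k:ℤ))) / (2*k) = g from hgoalnum]
  rw [show (Nat.divisors g).card = Nat.card {w // w ∈ Nat.divisors g} from
    (Nat.card_eq_fintype_card.trans (Fintype.card_coe _)).symm]
  apply Nat.card_congr
  refine Equiv.ofBijective
    (Quot.lift
      (fun x => (⟨Nat.gcd (x.1.val / q) g,
        Nat.mem_divisors.mpr ⟨Nat.gcd_dvd_right _ _, hg0⟩⟩ : {w // w ∈ Nat.divisors g}))
      (fun x y hxy => Subtype.ext ((hrel x y).mp hxy))) ⟨?_, ?_⟩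
  · intro a b
    induction a using Quot.ind with | _ x => ?_
    induction b using Quot.ind with | _ y => ?_
    intro hEq
    exact Quot.sound ((hrel x y).mpr (congrArg Subtype.val hEq))
  · rintro ⟨w, hw⟩
    obtain ⟨hwg, -⟩ := Nat.mem_divisors.mp hw
    have hqw : q * w ≤ 2*k := by
      calc q * w ≤ q * g := Nat.mul_le_mul_left q (Nat.le_of_dvd (Nat.pos_of_ne_zero hg0) hwg)
        _ = d := hg
        _ ≤ 2*k := Nat.le_of_dvd (Nat.pos_of_ne_zero hN0) hdN
    have hmemx : (S : ZMod (2*k)) * ((q*w : ℕ) : ZMod (2*k)) = 0 := by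
      rw [hmemZ]
      rcases lt_or_eq_of_le hqw with hlt | heq
      · rw [ZMod.val_cast_of_lt hlt]; exact ⟨w, rfl⟩
      · rw [heq, ZMod.natCast_self]
        simp
    refine ⟨Quot.mk _ ⟨((q*w : ℕ) : ZMod (2*k)), hmemx⟩, Subtype.ext ?_⟩
    show Nat.gcd (((q*w : ℕ) : ZMod (2*k)).val / q) g = w
    rcases lt_or_eq_of_le hqw with hlt | heq
    · rw [ZMod.val_cast_of_lt hlt, Nat.mul_div_cancel_left w (Nat.pos_of_ne_zero hq0)]
      exact Nat.gcd_eq_left hwg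
    · rw [heq, ZMod.natCast_self]
      have hwe : w = e := by
        have h1 : q * w = q * e := by rw [heq, ← hq]; ring
        exact Nat.eq_of_mul_eq_mul_left (Nat.pos_of_ne_zero hq0) h1
      have : g = w := Nat.dvd_antisymm (hwe ▸ hge) hwg
      simpa using this

end QDPaper
end

section
/- Let m = 4k, n = 2k, and r ∈ R²_m. Then the index of the cyclic subgroup ⟨r − 1⟩ in the subgroup ZDiv(r + 1) of Z_n satisfies |ZDiv(r + 1)/⟨r − 1⟩| ≤ 2; equivalently, gcd(r + 1, n)·gcd(r − 1, n) ≤ 2n. -/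
namespace QDPaper

/-- `ZDiv(c) = {y ∈ Z_n : c·y = 0}` (with `n = 2k`), as an additive subgroup of `Z_n`. -/
def ZDiv (k : ℕ) (c : ZMod (2*k)) : AddSubgroup (ZMod (2*k)) where
  carrier := {y | c * y = 0}
  zero_mem' := by simp
  add_mem' := by
    intro x y hx hy
    simp only [Set.mem_setOf_eq] at hx hy ⊢
    rw [mul_add, hx, hy, add_zero]
  neg_mem' := by
    intro x hx
    simp only [Set.mem_setOf_eq] at hx ⊢
    rw [mul_neg, hx, neg_zero]

lemma addOrderOf_intCast_zmod (x : ℤ) (n : ℕ) (hn : n ≠ 0) :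
    addOrderOf ((x : ZMod n)) = n / Int.gcd x n := by
  have hn' : (0:ℤ) < n := by exact_mod_cast Nat.pos_of_ne_zero hn
  set y : ℕ := (x % n).toNat with hy
  have hyx : (y : ℤ) = x % n := Int.toNat_of_nonneg (Int.emod_nonneg x hn'.ne')
  have hcast : ((y : ℕ) : ZMod n) = (x : ZMod n) := by
    have : ((y : ℤ) : ZMod n) = ((x : ℤ) : ZMod n) := by
      rw [ZMod.intCast_eq_intCast_iff', hyx, Int.emod_emod_of_dvd _ dvd_rfl]
    simpa using this
  have hxy : (y:ℤ) = x - n * (x / n) := by rw [hyx, Int.emod_def]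
  have hgcd : n.gcd y = Int.gcd x n := by
    apply Nat.dvd_antisymm
    · have h1 : ((n.gcd y : ℕ) : ℤ) ∣ (n:ℤ) := Int.ofNat_dvd.mpr (Nat.gcd_dvd_left n y)
      have h2 : ((n.gcd y : ℕ) : ℤ) ∣ (y:ℤ) := Int.ofNat_dvd.mpr (Nat.gcd_dvd_right n y)
      have hx : x = y + n * (x / n) := by rw [hxy]; ring
      have h3 : ((n.gcd y : ℕ) : ℤ) ∣ x := by
        rw [hx]; exact dvd_add h2 (h1.mul_right _)
      exact Int.ofNat_dvd.mp (Int.dvd_coe_gcd h3 h1)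
    · have h1 : ((Int.gcd x n : ℕ) : ℤ) ∣ x := Int.gcd_dvd_left _ _
      have h2 : ((Int.gcd x n : ℕ) : ℤ) ∣ (n:ℤ) := Int.gcd_dvd_right _ _
      have h3 : ((Int.gcd x n : ℕ) : ℤ) ∣ (y:ℤ) := by
        rw [hxy]; exact dvd_sub h1 (h2.mul_right _)
      exact Nat.dvd_gcd (Int.ofNat_dvd.mp h2) (Int.ofNat_dvd.mp h3)
  rw [← hcast, ZMod.addOrderOf_coe y hn, hgcd]

/-- Let `m = 4k`, `n = 2k`, and `r ∈ R²_m` (so `gcd(r,m) = 1` and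
`r² ≡ 1 (mod n)`). Then the index of `⟨r-1⟩` in `ZDiv(r+1) ≤ Z_n` satisfies
`|ZDiv(r+1)/⟨r-1⟩| ≤ 2`; equivalently, `gcd(r+1, n)·gcd(r-1, n) ≤ 2n`. -/
theorem statement15 (k : ℕ) (hk : 1 ≤ k) (r : ℤ)
    (hr : Int.gcd r (4*k) = 1) (hr2 : r^2 ≡ 1 [ZMOD (2*k)]) :
    Nat.card (ZDiv k ((r + 1 : ℤ) : ZMod (2*k)) ⧸
        (AddSubgroup.zmultiples ((r - 1 : ℤ) : ZMod (2*k))).addSubgroupOf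
          (ZDiv k ((r + 1 : ℤ) : ZMod (2*k)))) ≤ 2
    ∧ Int.gcd (r + 1) (2*k) * Int.gcd (r - 1) (2*k) ≤ 2 * (2*k) := by
  set n : ℕ := 2*k with hn
  have hn0 : n ≠ 0 := by omega
  haveI : NeZero n := ⟨hn0⟩
  set a : ℕ := Int.gcd (r+1) n with ha
  set b : ℕ := Int.gcd (r-1) n with hb
  set c : ZMod n := ((r + 1 : ℤ) : ZMod n) with hc
  set d : ZMod n := ((r - 1 : ℤ) : ZMod n) with hd
  -- divisibility facts
  have han : a ∣ n := Int.ofNat_dvd.mp (Int.gcd_dvd_right _ _)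
  have hbn : b ∣ n := Int.ofNat_dvd.mp (Int.gcd_dvd_right _ _)
  -- n ∣ (r+1)(r-1)
  have hdvd : (n : ℤ) ∣ (r + 1) * (r - 1) := by
    have h1 : (n : ℤ) ∣ 1 - r^2 := hr2.dvd
    have h2 : (r + 1) * (r - 1) = -(1 - r^2) := by ring
    rw [h2]; exact dvd_neg.mpr h1
  -- the gcd inequality
  have hg2 : Nat.gcd a b ∣ 2 := by
    have h1 : (Nat.gcd a b : ℤ) ∣ (r + 1) :=
      dvd_trans (Int.ofNat_dvd.mpr (Nat.gcd_dvd_left a b)) (Int.gcd_dvd_left _ _)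
    have h2 : (Nat.gcd a b : ℤ) ∣ (r - 1) :=
      dvd_trans (Int.ofNat_dvd.mpr (Nat.gcd_dvd_right a b)) (Int.gcd_dvd_left _ _)
    have h3 : (Nat.gcd a b : ℤ) ∣ 2 := by
      have := dvd_sub h1 h2
      simpa using this
    exact_mod_cast h3
  have hlcm : Nat.lcm a b ∣ n := Nat.lcm_dvd han hbn
  have habn : a * b ≤ 2 * n := by
    have h1 : a * b = Nat.gcd a b * Nat.lcm a b := (Nat.gcd_mul_lcm a b).symm
    have h2 : Nat.gcd a b ≤ 2 := Nat.le_of_dvd (by norm_num) hg2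
    have h3 : Nat.lcm a b ≤ n := Nat.le_of_dvd (Nat.pos_of_ne_zero hn0) hlcm
    calc a * b = Nat.gcd a b * Nat.lcm a b := h1
      _ ≤ 2 * n := Nat.mul_le_mul h2 h3
  refine ⟨?_, habn⟩
  -- index part
  have hcd : c * d = 0 := by
    rw [hc, hd, ← Int.cast_mul, ZMod.intCast_zmod_eq_zero_iff_dvd]
    exact hdvd
  have hKH : AddSubgroup.zmultiples d ≤ ZDiv k c := by
    intro x hx
    obtain ⟨z, rfl⟩ := hx
    show c * (z • d) = 0
    rw [mul_smul_comm, hcd, smul_zero]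
  have hb_ord : addOrderOf d = n / b := addOrderOf_intCast_zmod _ n hn0
  have ha_ord : addOrderOf c = n / a := addOrderOf_intCast_zmod _ n hn0
  -- card of ZDiv k c = a, via kernel of multiplication
  set f : ZMod n →+ ZMod n := AddMonoidHom.mulLeft c with hf
  have hker : f.ker = ZDiv k c := by
    ext x
    simp only [AddMonoidHom.mem_ker, hf]
    rfl
  have hrange : f.range = AddSubgroup.zmultiples c := by
    ext x
    simp only [AddMonoidHom.mem_range, hf, AddSubgroup.mem_zmultiples_iff]
    constructor
    · rintro ⟨y, rfl⟩
      refine ⟨(y.val : ℤ), ?_⟩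
      show (y.val : ℤ) • c = AddMonoidHom.mulLeft c y
      rw [natCast_zsmul, ← Nat.cast_smul_eq_nsmul (ZMod n), ZMod.natCast_val, ZMod.cast_id,
        smul_eq_mul, mul_comm]
      rfl
    · rintro ⟨z, rfl⟩
      refine ⟨(z : ZMod n), ?_⟩
      show c * (z : ZMod n) = z • c
      rw [zsmul_eq_mul, mul_comm]
  have hcardH : Nat.card (ZDiv k c) = a := by
    have h1 : Nat.card (ZMod n) =
        Nat.card (ZMod n ⧸ f.ker) * Nat.card f.ker :=
      AddSubgroup.card_eq_card_quotient_mul_card_addSubgroup _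
    have h2 : Nat.card (ZMod n ⧸ f.ker) = Nat.card f.range :=
      Nat.card_congr (QuotientAddGroup.quotientKerEquivRange f).toEquiv
    have h3 : Nat.card f.range = n / a := by
      rw [hrange, Nat.card_zmultiples, ha_ord]
    have h4 : Nat.card (ZMod n) = n := Nat.card_zmod n
    rw [h2, h3, h4, hker] at h1
    have hna : n / a ≠ 0 := by
      have := Nat.div_pos (Nat.le_of_dvd (Nat.pos_of_ne_zero hn0) han)
        (Nat.pos_of_dvd_of_pos han (Nat.pos_of_ne_zero hn0))
      omega
    have h5 : n / (n / a) = Nat.card (ZDiv k c) :=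
      Nat.div_eq_of_eq_mul_left (Nat.pos_of_ne_zero hna)
        (h1.trans (mul_comm _ _))
    rw [← h5, Nat.div_div_self han hn0]
  set K' := (AddSubgroup.zmultiples d).addSubgroupOf (ZDiv k c) with hK'
  have hcardK' : Nat.card K' = n / b := by
    have := Nat.card_congr (AddSubgroup.addSubgroupOfEquivOfLe hKH).toEquiv
    rw [this, Nat.card_zmultiples, hb_ord]
  have hindex : K'.index * (n / b) = a := by
    rw [← hcardK', ← hcardH]
    exact AddSubgroup.index_mul_card K'
  have hin : K'.index * n = a * b := by
    calc K'.index * n = K'.index * ((n / b) * b) := by rw [Nat.div_mul_cancel hbn]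
      _ = (K'.index * (n / b)) * b := by rw [mul_assoc]
      _ = a * b := by rw [hindex]
  have hfin : K'.index ≤ 2 := by
    have h2n : K'.index * n ≤ 2 * n := by rw [hin]; exact habn
    exact Nat.le_of_mul_le_mul_right h2n (Nat.pos_of_ne_zero hn0)
  exact hfin

end QDPaper
end
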